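/- (Gcd normal test) Let F ⊆ K be finite fields with q = |F| and n = [K : F], and let η ∈ K. The conjugates η, η^q, …, η^{q^{n−1}} form an F-basis of K if and only if the polynomials xⁿ − 1 and g(x) = η + η^q·x + η^{q²}·x² + ⋯ + η^{q^{n−1}}·x^{n−1} are coprime in K[x] (i.e. they generate the unit ideal of K[x]). -/

import Mathlib

open Polynomial


theorem auxA {R : Type*} [Semiring R] (a : ℕ → R) (n j : ℕ) :
    (∑ i ∈ Finset.range n, C (a i) * X ^ i).coeff j = if j < n then a j else 0 := by
  rw [finset_sum_coeff]
  simp only [coeff_C_mul, coeff_X_pow]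
  rw [Finset.sum_congr rfl (fun i _ => by rw [mul_ite, mul_one, mul_zero])]
  simp [Finset.sum_ite_eq' (Finset.range n) j, Finset.mem_range]

-- key identity: X * g^φ = g + C η * (X^n - 1)
theorem auxD {K : Type*} [Field K] (q n : ℕ) (η : K) (hη : η ^ q ^ n = η)
    (φ : K →+* K) (hφ : ∀ x, φ x = x ^ q) :
    X * Polynomial.map φ (∑ i ∈ Finset.range n, C (η ^ q ^ i) * X ^ i) =
      (∑ i ∈ Finset.range n, C (η ^ q ^ i) * X ^ i) + C η * (X ^ n - 1) := by
  rw [Polynomial.map_sum]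
  simp only [Polynomial.map_mul, Polynomial.map_pow, map_C, map_X, hφ, ← pow_mul, ← pow_succ]
  rw [Finset.mul_sum]
  have : ∀ i ∈ Finset.range n, X * (C (η ^ q ^ (i + 1)) * X ^ i) =
      C (η ^ q ^ (i + 1)) * X ^ (i + 1) := fun i _ => by ring
  rw [Finset.sum_congr rfl this]
  have h2 : ∑ i ∈ Finset.range n, C (η ^ q ^ (i + 1)) * X ^ (i + 1) =
      (∑ i ∈ Finset.range (n + 1), C (η ^ q ^ i) * X ^ i) - C (η ^ q ^ 0) * X ^ 0 := by
    rw [Finset.sum_range_succ' (fun i => C (η ^ q ^ i) * X ^ i) n]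
    ring
  rw [h2, Finset.sum_range_succ, hη]
  simp only [pow_zero, pow_one]
  ring


theorem auxF {F K : Type*} [Field F] [Fintype F] [Field K] [Fintype K] [Algebra F K]
    (c : K) (h : c ^ Fintype.card F = c) : ∃ a : F, algebraMap F K a = c := by
  classical
  by_contra hc
  push_neg at hc
  set q := Fintype.card F with hq
  set P : K[X] := X ^ q - X with hP
  have hq1 : 1 < q := Fintype.one_lt_card
  have hPne : P ≠ 0 := FiniteField.X_pow_card_sub_X_ne_zero K hq1
  have hdeg : P.natDegree = q := FiniteField.X_pow_card_sub_X_natDegree_eq K hq1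
  set s : Finset K := Finset.univ.image (algebraMap F K) with hs
  have hcard : s.card = q := by
    rw [hs, Finset.card_image_of_injective _ (algebraMap F K).injective, Finset.card_univ]
  have hcs : c ∉ s := by
    rw [hs]
    simp only [Finset.mem_image, Finset.mem_univ, true_and]
    exact fun ⟨a, ha⟩ => hc a ha
  set t : Finset K := insert c s with ht
  have htcard : t.card = q + 1 := by rw [ht, Finset.card_insert_of_notMem hcs, hcard]
  have hroots : t.val ≤ P.roots := by
    refine Multiset.le_iff_count.mpr fun x => ?_
    by_cases hx : x ∈ t
    · have hxr : x ∈ P.roots := by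
        rw [mem_roots hPne]
        have hxq : x ^ q = x := by
          rcases Finset.mem_insert.mp hx with rfl | hxs
          · exact h
          · obtain ⟨a, -, rfl⟩ := Finset.mem_image.mp hxs
            rw [← map_pow, FiniteField.pow_card]
        simp [hP, IsRoot, hxq]
      calc Multiset.count x t.val = 1 := Multiset.count_eq_one_of_mem t.nodup hx
        _ ≤ _ := Multiset.one_le_count_iff_mem.mpr hxr
    · rw [Multiset.count_eq_zero_of_notMem (by simpa using hx)]
      exact Nat.zero_le _
  have h1 : Multiset.card t.val ≤ Multiset.card P.roots := Multiset.card_le_card hroots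
  have h2 : Multiset.card P.roots ≤ q := hdeg ▸ P.card_roots'
  have h3 : Multiset.card t.val = q + 1 := htcard
  omega


theorem auxP {K : Type*} [Field K] {q n : ℕ} (hn : 0 < n) (η : K) (hη : η ^ q ^ n = η)
    (t : ℕ) : η ^ q ^ t = η ^ q ^ (t % n) := by
  induction t using Nat.strong_induction_on with
  | _ t ih =>
    rcases lt_or_ge t n with h | h
    · rw [Nat.mod_eq_of_lt h]
    · have h1 : η ^ q ^ t = η ^ q ^ (t - n) := by
        conv_lhs => rw [show t = (t - n) + n by omega]
        rw [pow_add, mul_comm, pow_mul, hη]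
      rw [h1, ih (t - n) (by omega), Nat.mod_eq_sub_mod h]

theorem auxS {F K : Type*} [Field F] [Fintype F] [Field K] [Fintype K] [Algebra F K]
    {p m n : ℕ} (hn : 0 < n) [Fact p.Prime] [CharP K p] (hq : Fintype.card F = p ^ m)
    (η : K) (hη : η ^ Fintype.card F ^ n = η) (c : Fin n → F)
    (hrel : ∑ i : Fin n, algebraMap F K (c i) * η ^ Fintype.card F ^ (i : ℕ) = 0) (s : ℕ) :
    ∑ i : Fin n, algebraMap F K (c i) * η ^ Fintype.card F ^ (((i : ℕ) + s) % n) = 0 := by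
  haveI : ExpChar K p := ExpChar.prime (Fact.out)
  set q := Fintype.card F with hqdef
  have hq0 : 0 < q := Fintype.card_pos
  have key := congrArg (fun x => x ^ q ^ s) hrel
  rw [zero_pow (pow_ne_zero _ hq0.ne')] at key
  have hhom : ∀ x : K, x ^ q ^ s = (iterateFrobenius K p (m * s)) x := by
    intro x
    rw [iterateFrobenius_def, hq, ← pow_mul]
  rw [hhom, map_sum] at key
  rw [← key]
  refine Finset.sum_congr rfl fun i _ => ?_
  rw [map_mul, ← hhom, ← hhom, ← map_pow, FiniteField.pow_card_pow]
  congr 1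
  rw [← pow_mul, ← pow_add, auxP hn η hη ((i : ℕ) + s)]

theorem auxB {K : Type*} [Field K] {n : ℕ} (hn : 0 < n) (p : K[X])
    (hdeg : p.natDegree ≤ 2 * n - 2) :
    (X ^ n - 1 : K[X]) ∣ p ↔ ∀ k < n, p.coeff k + p.coeff (n + k) = 0 := by
  have hf : (X ^ n - 1 : K[X]) = X ^ n - C 1 := by rw [map_one]
  have hfdeg : (X ^ n - 1 : K[X]).natDegree = n := by rw [hf, natDegree_X_pow_sub_C]
  have hfne : (X ^ n - 1 : K[X]) ≠ 0 := by
    intro h0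
    rw [h0, natDegree_zero] at hfdeg; omega
  constructor
  · rintro ⟨u, hu⟩ k hk
    rcases eq_or_ne u 0 with rfl | hune
    · simp [hu]
    have hud : u.natDegree ≤ n - 2 := by
      have := natDegree_mul hfne hune
      rw [← hu, hfdeg] at this
      omega
    have hmul : p = u * X ^ n - u := by rw [hu]; ring
    have h1 : p.coeff k = -u.coeff k := by
      rw [hmul, coeff_sub, coeff_mul_X_pow', if_neg (by omega)]
      ring
    have h2 : p.coeff (n + k) = u.coeff k := by
      rw [hmul, coeff_sub, coeff_mul_X_pow', if_pos (by omega),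
        coeff_eq_zero_of_natDegree_lt (by omega : u.natDegree < n + k)]
      simp [Nat.add_sub_cancel_left]
    rw [h1, h2]; ring
  · intro hfold
    refine ⟨-(∑ k ∈ Finset.range n, C (p.coeff k) * X ^ k), ?_⟩
    set u : K[X] := -(∑ k ∈ Finset.range n, C (p.coeff k) * X ^ k) with hudef
    have hucoeff : ∀ j, u.coeff j = -(if j < n then p.coeff j else 0) := fun j => by
      rw [hudef, coeff_neg, auxA]
    have hmul : (X ^ n - 1 : K[X]) * u = u * X ^ n - u := by ring
    rw [hmul]
    ext m
    rw [coeff_sub, coeff_mul_X_pow']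
    simp only [hucoeff]
    rcases lt_or_ge m n with h | h
    · rw [if_neg (not_le.mpr h), if_pos h]; ring
    · rw [if_pos h, if_neg (by omega : ¬ m < n)]
      rcases lt_or_ge (m - n) n with h2 | h2
      · rw [if_pos h2]
        have h3 := hfold (m - n) h2
        rw [(by omega : n + (m - n) = m)] at h3
        linear_combination h3
      · rw [if_neg (by omega), coeff_eq_zero_of_natDegree_lt (by omega : p.natDegree < m)]
        ring

theorem auxC {K : Type*} [Field K] {q n : ℕ} (η : K) (h : K[X])
    (hh : ∀ i, n ≤ i → h.coeff i = 0) (k : ℕ) (hk : k < n) :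
    (h * (∑ i ∈ Finset.range n, C (η ^ q ^ i) * X ^ i)).coeff k
      + (h * (∑ i ∈ Finset.range n, C (η ^ q ^ i) * X ^ i)).coeff (n + k)
      = ∑ i ∈ Finset.range n, h.coeff i * η ^ q ^ ((n + k - i) % n) := by
  set g : K[X] := ∑ i ∈ Finset.range n, C (η ^ q ^ i) * X ^ i with hgdef
  have hg : ∀ j, g.coeff j = if j < n then η ^ q ^ j else 0 := fun j => auxA _ n j
  have step1 : (h * g).coeff k =
      ∑ i ∈ Finset.range (k + 1), h.coeff i * η ^ q ^ ((n + k - i) % n) := by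
    rw [coeff_mul, Finset.Nat.sum_antidiagonal_eq_sum_range_succ_mk]
    refine Finset.sum_congr rfl fun i hi => ?_
    rw [Finset.mem_range] at hi
    have hik : i ≤ k := by omega
    rw [hg, if_pos (by omega), show (n + k - i) % n = k - i by
      rw [show n + k - i = n + (k - i) by omega, Nat.add_mod_left, Nat.mod_eq_of_lt (by omega)]]
  have step2 : (h * g).coeff (n + k) =
      ∑ i ∈ Finset.Ico (k + 1) n, h.coeff i * η ^ q ^ ((n + k - i) % n) := by
    rw [coeff_mul, Finset.Nat.sum_antidiagonal_eq_sum_range_succ_mk]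
    rw [← Finset.sum_subset (by intro x hx; rw [Finset.mem_Ico] at hx; rw [Finset.mem_range]; omega :
        Finset.Ico (k + 1) n ⊆ Finset.range (n + k + 1)) ?van]
    · refine Finset.sum_congr rfl fun i hi => ?_
      rw [Finset.mem_Ico] at hi
      rw [hg, if_pos (by omega), Nat.mod_eq_of_lt (by omega)]
    · intro x hx hxn
      rw [Finset.mem_range] at hx
      rw [Finset.mem_Ico] at hxn
      rcases le_or_gt n x with hc | hc
      · rw [hh x hc, zero_mul]
      · rw [hg, if_neg (by omega), mul_zero]
  rw [step1, step2, Finset.range_eq_Ico,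
    Finset.sum_Ico_consecutive _ (Nat.zero_le _) (by omega : k + 1 ≤ n), ← Finset.range_eq_Ico]

/-- (Gcd normal test) The conjugates of `η ∈ K` form an `F`-basis of `K` iff `xⁿ − 1` and
`g(x) = η + η^q x + ⋯ + η^{q^{n−1}} x^{n−1}` are coprime in `K[x]`. -/
theorem stmt10 (F K : Type*) [Field F] [Fintype F] [Field K] [Fintype K] [Algebra F K]
    (n : ℕ) (hn : Module.finrank F K = n) (η : K) :
    (LinearIndependent F (fun i : Fin n => η ^ Fintype.card F ^ (i : ℕ)) ∧
        Submodule.span F (Set.range fun i : Fin n => η ^ Fintype.card F ^ (i : ℕ)) = ⊤) ↔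
      IsCoprime ((X : Polynomial K) ^ n - 1)
        (∑ i ∈ Finset.range n, C (η ^ Fintype.card F ^ i) * X ^ i) := by
  classical
  set q := Fintype.card F with hqdef
  set f : K[X] := X ^ n - 1 with hfdef
  set g : K[X] := ∑ i ∈ Finset.range n, C (η ^ q ^ i) * X ^ i with hgdef
  haveI : Module.Finite F K := Module.Finite.of_finite
  have npos : 0 < n := hn ▸ Module.finrank_pos
  have hcardK : Fintype.card K = q ^ n := by
    rw [← hn]; exact Module.card_eq_pow_finrank
  have hη : η ^ q ^ n = η := by rw [← hcardK]; exact FiniteField.pow_card η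
  set p := ringChar F with hpdef
  haveI : CharP F p := ringChar.charP F
  obtain ⟨m, hp, hqpm⟩ := FiniteField.card F p
  haveI : Fact p.Prime := ⟨hp⟩
  haveI : CharP K p := charP_of_injective_algebraMap (algebraMap F K).injective p
  haveI : ExpChar K p := ExpChar.prime hp
  set φ : K →+* K := iterateFrobenius K p m with hφdef
  have hφ : ∀ x : K, φ x = x ^ q := fun x => by rw [hφdef, iterateFrobenius_def, ← hqpm]
  have hfC : f = X ^ n - C 1 := by rw [hfdef, map_one]
  have hfdeg : f.natDegree = n := by rw [hfC, natDegree_X_pow_sub_C]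
  have hfmonic : f.Monic := by rw [hfC]; exact monic_X_pow_sub_C 1 npos.ne'
  have hfne : f ≠ 0 := hfmonic.ne_zero
  have hgc : ∀ j, g.coeff j = if j < n then η ^ q ^ j else 0 := fun j => auxA _ n j
  have hgd : ∀ i, n ≤ i → g.coeff i = 0 := fun i hi => by rw [hgc, if_neg (by omega)]
  have hgdeg : g.natDegree ≤ n - 1 :=
    natDegree_le_iff_coeff_eq_zero.mpr fun m hm => hgd m (by omega)
  have hAnn : ∀ h : K[X], (∀ i, n ≤ i → h.coeff i = 0) →
      ((f ∣ h * g) ↔ ∀ k < n,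
        (∑ i ∈ Finset.range n, h.coeff i * η ^ q ^ ((n + k - i) % n)) = 0) := by
    intro h hh
    have hhdeg : h.natDegree ≤ n - 1 :=
      natDegree_le_iff_coeff_eq_zero.mpr fun m hm => hh m (by omega)
    have hmul : (h * g).natDegree ≤ 2 * n - 2 :=
      le_trans natDegree_mul_le (by omega)
    rw [hfdef, auxB npos _ hmul]
    refine forall_congr' fun k => imp_congr_right fun hk => ?_
    rw [hgdef, auxC η h hh k hk]
  -- Direction A : coprime → linear independent
  have dirA : IsCoprime f g → LinearIndependent F (fun i : Fin n => η ^ q ^ (i : ℕ)) := by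
    intro hcop
    rw [Fintype.linearIndependent_iff]
    intro c hc
    have hrel : ∑ i : Fin n, algebraMap F K (c i) * η ^ q ^ (i : ℕ) = 0 := by
      rw [← hc]; exact Finset.sum_congr rfl fun i _ => (Algebra.smul_def _ _).symm
    set b : ℕ → F := fun j => if hj : j < n then c ⟨j, hj⟩ else 0 with hbdef
    set h : K[X] := ∑ j ∈ Finset.range n, C (algebraMap F K (b (n - 1 - j))) * X ^ j with hhdef
    have hhc : ∀ j, h.coeff j = if j < n then algebraMap F K (b (n - 1 - j)) else 0 :=
      fun j => auxA _ n j
    have hhd : ∀ i, n ≤ i → h.coeff i = 0 := fun i hi => by rw [hhc, if_neg (by omega)]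
    have hann : f ∣ h * g := by
      rw [hAnn h hhd]
      intro k hk
      have e1 : ∀ i ∈ Finset.range n, h.coeff i * η ^ q ^ ((n + k - i) % n)
          = (fun j => algebraMap F K (b j) * η ^ q ^ ((j + (k + 1)) % n)) (n - 1 - i) := by
        intro i hi; rw [Finset.mem_range] at hi
        simp only
        rw [hhc, if_pos hi, show n - 1 - i + (k + 1) = n + k - i by omega]
      rw [Finset.sum_congr rfl e1,
        Finset.sum_range_reflect (fun j => algebraMap F K (b j) * η ^ q ^ ((j + (k + 1)) % n)) n,
        ← Fin.sum_univ_eq_sum_range (fun j => algebraMap F K (b j) * η ^ q ^ ((j + (k + 1)) % n)) n]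
      have hS := auxS npos hqpm η hη c hrel (k + 1)
      rw [← hS]
      refine Finset.sum_congr rfl fun i _ => ?_
      rw [hbdef]
      simp only [i.isLt, dif_pos]
      rfl
    obtain ⟨u, v, huv⟩ := hcop
    obtain ⟨w, hw⟩ := hann
    have hfh : f ∣ h := by
      refine ⟨u * h + v * w, ?_⟩
      calc h = (u * f + v * g) * h := by rw [huv]; ring
        _ = u * f * h + v * (h * g) := by ring
        _ = u * f * h + v * (f * w) := by rw [hw]
        _ = f * (u * h + v * w) := by ring
    have hh0 : h = 0 := by
      by_contra hne
      have h1 := natDegree_le_of_dvd hfh hne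
      have h2 : h.natDegree ≤ n - 1 :=
        natDegree_le_iff_coeff_eq_zero.mpr fun m hm => hhd m (by omega)
      omega
    intro i
    have hz : h.coeff (n - 1 - (i : ℕ)) = 0 := by rw [hh0, coeff_zero]
    rw [hhc, if_pos (by omega)] at hz
    have hb0 : b (n - 1 - (n - 1 - (i : ℕ))) = 0 :=
      (algebraMap F K).injective (by rw [hz, map_zero])
    rw [show n - 1 - (n - 1 - (i : ℕ)) = (i : ℕ) by omega] at hb0
    rw [hbdef] at hb0
    simpa only [i.isLt, dif_pos] using hb0
  -- Direction B : not coprime → not linear independent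
  have dirB : ¬ IsCoprime f g → ¬ LinearIndependent F (fun i : Fin n => η ^ q ^ (i : ℕ)) := by
    intro hncop hli
    set I : Ideal K[X] :=
      { carrier := {h | f ∣ h * g},
        add_mem' := fun {a b} ha hb => by
          simp only [Set.mem_setOf_eq] at *
          rw [add_mul]; exact dvd_add ha hb
        zero_mem' := by simp
        smul_mem' := fun c h hh => by
          simp only [Set.mem_setOf_eq, smul_eq_mul] at *
          rw [mul_assoc]; exact hh.mul_left c } with hIdef
    haveI hprin : I.IsPrincipal := IsPrincipalIdealRing.principal I
    set d0 := Submodule.IsPrincipal.generator I with hd0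
    have hI : Ideal.span {d0} = I := Submodule.IsPrincipal.span_singleton_generator I
    have hfI : f ∈ I := by show f ∣ f * g; exact dvd_mul_right f g
    have hd0ne : d0 ≠ 0 := by
      intro h0
      have hIbot : I = ⊥ := by rw [← hI, h0]; exact Ideal.span_singleton_eq_bot.mpr rfl
      rw [hIbot] at hfI
      exact hfne (Ideal.mem_bot.mp hfI)
    set d := normalize d0 with hddef
    have hdmonic : d.Monic := monic_normalize hd0ne
    have hdne : d ≠ 0 := hdmonic.ne_zero
    have hId : Ideal.span {d} = I := by
      rw [← hI]
      exact Ideal.span_singleton_eq_span_singleton.mpr (normalize_associated d0)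
    have hmem : ∀ h : K[X], h ∈ I ↔ d ∣ h := fun h => by rw [← hId, Ideal.mem_span_singleton]
    have hdI : d ∈ I := (hmem d).mpr dvd_rfl
    have hdg : f ∣ d * g := hdI
    have hdf : d ∣ f := (hmem f).mp hfI
    have hsmall : ∃ h, h ∈ I ∧ h ≠ 0 ∧ h.natDegree < n := by
      set c0 := EuclideanDomain.gcd f g with hc0
      have hc0u : ¬ IsUnit c0 := fun hu => hncop (EuclideanDomain.gcd_isUnit_iff.mp hu)
      have hc0ne : c0 ≠ 0 := fun h0 => hfne (EuclideanDomain.gcd_eq_zero_iff.mp h0).1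
      obtain ⟨a, ha⟩ := EuclideanDomain.gcd_dvd_left f g
      obtain ⟨b, hb⟩ := EuclideanDomain.gcd_dvd_right f g
      have hane : a ≠ 0 := fun h0 => hfne (by rw [ha, h0, mul_zero])
      have hc0deg : 0 < c0.natDegree := by
        rcases Nat.eq_zero_or_pos c0.natDegree with h0 | h0
        · exfalso
          apply hc0u
          rw [eq_C_of_natDegree_eq_zero h0]
          refine isUnit_C.mpr (isUnit_iff_ne_zero.mpr fun hz => hc0ne ?_)
          rw [eq_C_of_natDegree_eq_zero h0, hz, map_zero]
        · exact h0
      refine ⟨a, ?_, hane, ?_⟩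
      · show f ∣ a * g
        refine ⟨b, ?_⟩
        calc a * g = a * (c0 * b) := by rw [← hb]
          _ = c0 * a * b := by ring
          _ = f * b := by rw [← ha]
      · have hdm := natDegree_mul hc0ne hane
        rw [← ha, hfdeg] at hdm
        omega
    obtain ⟨h1, hh1I, hh1ne, hh1deg⟩ := hsmall
    have hdd1 : d ∣ h1 := (hmem h1).mp hh1I
    have hddeg : d.natDegree < n := lt_of_le_of_lt (natDegree_le_of_dvd hdd1 hh1ne) hh1deg
    have hfσ : Polynomial.map φ f = f := by
      rw [hfdef]
      simp [Polynomial.map_sub, Polynomial.map_pow, Polynomial.map_one, map_X]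
    have hgid : (g : K[X]) = X * Polynomial.map φ g - C η * f := by
      have hD := auxD q n η hη φ hφ
      rw [← hgdef, ← hfdef] at hD
      linear_combination -hD
    have hstab : ∀ h ∈ I, X ^ (n - 1) * Polynomial.map φ h ∈ I := by
      intro h hh
      obtain ⟨w, hw⟩ := hh
      show f ∣ X ^ (n - 1) * Polynomial.map φ h * g
      have e2 : Polynomial.map φ (h * g) = f * Polynomial.map φ w := by
        rw [hw, Polynomial.map_mul, hfσ]
      refine ⟨X ^ (n - 1) * X * Polynomial.map φ w - C η * (X ^ (n - 1) * Polynomial.map φ h), ?_⟩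
      calc X ^ (n - 1) * Polynomial.map φ h * g
          = X ^ (n - 1) * X * (Polynomial.map φ h * Polynomial.map φ g)
            - C η * f * (X ^ (n - 1) * Polynomial.map φ h) := by
            conv_lhs => rw [hgid]
            ring
        _ = X ^ (n - 1) * X * (f * Polynomial.map φ w)
            - C η * f * (X ^ (n - 1) * Polynomial.map φ h) := by
            rw [← Polynomial.map_mul, e2]
        _ = f * (X ^ (n - 1) * X * Polynomial.map φ w
            - C η * (X ^ (n - 1) * Polynomial.map φ h)) := by ring
    have hstabd : d ∣ X ^ (n - 1) * Polynomial.map φ d := (hmem _).mp (hstab d hdI)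
    have hXf : IsCoprime (X : K[X]) f := by
      refine ⟨X ^ (n - 1), -1, ?_⟩
      rw [hfdef]
      have hXn : (X : K[X]) ^ (n - 1) * X = X ^ n := by
        rw [← pow_succ]; congr 1; omega
      linear_combination hXn
    have hXd : IsCoprime (X : K[X]) d := hXf.of_isCoprime_of_dvd_right hdf
    have hXnd : IsCoprime d ((X : K[X]) ^ (n - 1)) := (hXd.pow_left).symm
    have hdvdσ : d ∣ Polynomial.map φ d := hXnd.dvd_of_dvd_mul_left hstabd
    have hσdeg : (Polynomial.map φ d).natDegree = d.natDegree :=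
      natDegree_map_eq_of_injective φ.injective d
    have hσmonic : (Polynomial.map φ d).Monic := hdmonic.map φ
    have hdσ : Polynomial.map φ d = d := by
      obtain ⟨v, hv⟩ := hdvdσ
      have hvne : v ≠ 0 := fun h0 => hσmonic.ne_zero (by rw [hv, h0, mul_zero])
      have hdegv : v.natDegree = 0 := by
        have hnm := natDegree_mul hdne hvne
        rw [← hv, hσdeg] at hnm; omega
      have hlc : v.leadingCoeff = 1 := by
        have hl := congrArg leadingCoeff hv
        rw [hσmonic.leadingCoeff, leadingCoeff_mul, hdmonic.leadingCoeff, one_mul] at hl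
        exact hl.symm
      have hv1 : v = 1 := by
        rw [eq_C_of_natDegree_eq_zero hdegv]
        rw [leadingCoeff, hdegv] at hlc
        rw [hlc, map_one]
      rw [hv, hv1, mul_one]
    have hfix : ∀ i, (d.coeff i) ^ q = d.coeff i := fun i => by
      have hc := congrArg (fun P => P.coeff i) hdσ
      simpa [coeff_map, hφ] using hc
    choose b hb using fun i => auxF (d.coeff i) (hfix i)
    rw [Fintype.linearIndependent_iff] at hli
    set c : Fin n → F := fun t => b (n - 1 - (t : ℕ)) with hcdef
    have hrel0 : ∑ i ∈ Finset.range n, d.coeff i * η ^ q ^ ((n + (n - 1) - i) % n) = 0 := by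
      have hdd0 : ∀ i, n ≤ i → d.coeff i = 0 := fun i hi =>
        coeff_eq_zero_of_natDegree_lt (by omega)
      exact (hAnn d hdd0).mp hdg (n - 1) (by omega)
    have hrel1 : ∑ i ∈ Finset.range n, algebraMap F K (b i) * η ^ q ^ (n - 1 - i) = 0 := by
      rw [← hrel0]
      refine Finset.sum_congr rfl fun i hi => ?_
      rw [Finset.mem_range] at hi
      rw [hb, show (n + (n - 1) - i) % n = n - 1 - i by
        rw [show n + (n - 1) - i = n + (n - 1 - i) by omega, Nat.add_mod_left,
          Nat.mod_eq_of_lt (by omega)]]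
    have hcsum : ∑ t : Fin n, c t • η ^ q ^ (t : ℕ) = 0 := by
      have e3 : ∀ t : Fin n, c t • η ^ q ^ (t : ℕ)
          = (fun j => algebraMap F K (b (n - 1 - j)) * η ^ q ^ j) (t : ℕ) := fun t => by
        simp only [hcdef, Algebra.smul_def]
      rw [Finset.sum_congr rfl fun t _ => e3 t,
        Fin.sum_univ_eq_sum_range (fun j => algebraMap F K (b (n - 1 - j)) * η ^ q ^ j) n]
      have e4 : ∀ j ∈ Finset.range n, algebraMap F K (b (n - 1 - j)) * η ^ q ^ j
          = (fun i => algebraMap F K (b i) * η ^ q ^ (n - 1 - i)) (n - 1 - j) := by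
        intro j hj; rw [Finset.mem_range] at hj
        simp only
        rw [show n - 1 - (n - 1 - j) = j by omega]
      rw [Finset.sum_congr rfl e4,
        Finset.sum_range_reflect (fun i => algebraMap F K (b i) * η ^ q ^ (n - 1 - i)) n]
      exact hrel1
    have hall := hli c hcsum
    have he : d.natDegree < n := hddeg
    have hce : c ⟨n - 1 - d.natDegree, by omega⟩ = 0 := hall _
    rw [hcdef] at hce
    simp only at hce
    rw [show n - 1 - (n - 1 - d.natDegree) = d.natDegree by omega] at hce
    have hde : d.coeff d.natDegree = 0 := by rw [← hb, hce, map_zero]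
    rw [hdmonic.coeff_natDegree] at hde
    exact one_ne_zero hde
  constructor
  · rintro ⟨hli, -⟩
    by_contra hncop
    exact dirB hncop hli
  · intro hcop
    haveI : Nonempty (Fin n) := Fin.pos_iff_nonempty.mp npos
    refine ⟨dirA hcop, (dirA hcop).span_eq_top_of_card_eq_finrank ?_⟩
    rw [Fintype.card_fin, hn]
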